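/- Let $c_i \ge 0$ and $v_i \in \mathbb{R}^q$ for $i = 1, \ldots, n$, and $\pi_i \in (0,1]$ with $\sum_{i=1}^n \pi_i = r$. Then $\mathrm{tr}\left(\sum_{i=1}^n \frac{c_i^2}{\pi_i} v_i v_i^T\right) = \sum_{i=1}^n \frac{c_i^2 \|v_i\|^2}{\pi_i} \ge \frac{1}{r}\left(\sum_{i=1}^n c_i \|v_i\|\right)^2$, with equality when $\pi_i \propto c_i \|v_i\|$. -/

import Mathlib

open Matrix Finset

/-- mVc (L-optimality) criterion of Theorem 3: for probabilities `π i ∈ (0,1]`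
with `∑ π i = r`, `tr(∑ c i ²/π i · v i v iᵀ) = ∑ c i ² ‖v i‖² / π i
≥ (1/r)(∑ c i ‖v i‖)²`, with equality when `π i ∝ c i ‖v i‖`. -/
theorem stmt_13 (q n : ℕ) (r : ℕ) (hr : 0 < r)
    (c : Fin n → ℝ) (hc : ∀ i, 0 ≤ c i) (v : Fin n → Fin q → ℝ)
    (π : Fin n → ℝ) (hπ : ∀ i, 0 < π i ∧ π i ≤ 1)
    (hsum : ∑ i, π i = (r : ℝ)) :
    Matrix.trace (∑ i, ((c i) ^ 2 / π i) • Matrix.vecMulVec (v i) (v i)) =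
        ∑ i, (c i) ^ 2 * (v i ⬝ᵥ v i) / π i ∧
      (1 / (r : ℝ)) * (∑ i, c i * Real.sqrt (v i ⬝ᵥ v i)) ^ 2 ≤
        ∑ i, (c i) ^ 2 * (v i ⬝ᵥ v i) / π i ∧
      ((∃ t : ℝ, ∀ i, π i = t * (c i * Real.sqrt (v i ⬝ᵥ v i))) →
        ∑ i, (c i) ^ 2 * (v i ⬝ᵥ v i) / π i =
          (1 / (r : ℝ)) * (∑ i, c i * Real.sqrt (v i ⬝ᵥ v i)) ^ 2) := by
  have hvv : ∀ i, (0:ℝ) ≤ v i ⬝ᵥ v i := fun i =>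
    Finset.sum_nonneg fun j _ => mul_self_nonneg _
  have hsq : ∀ i, (c i * Real.sqrt (v i ⬝ᵥ v i)) ^ 2 = c i ^ 2 * (v i ⬝ᵥ v i) := by
    intro i
    rw [mul_pow, Real.sq_sqrt (hvv i)]
  refine ⟨?_, ?_, ?_⟩
  · simp only [Matrix.trace_sum, Matrix.trace_smul, smul_eq_mul]
    refine Finset.sum_congr rfl fun i _ => ?_
    have : Matrix.trace (Matrix.vecMulVec (v i) (v i)) = v i ⬝ᵥ v i := by
      simp [Matrix.trace, Matrix.vecMulVec, Matrix.diag, dotProduct]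
    rw [this]; ring
  · have := Finset.sq_sum_div_le_sum_sq_div Finset.univ
      (fun i => c i * Real.sqrt (v i ⬝ᵥ v i)) (g := π) (fun i _ => (hπ i).1)
    simp only [hsq, hsum] at this
    calc (1 / (r : ℝ)) * (∑ i, c i * Real.sqrt (v i ⬝ᵥ v i)) ^ 2
        = (∑ i, c i * Real.sqrt (v i ⬝ᵥ v i)) ^ 2 / (r : ℝ) := by ring
      _ ≤ _ := this
  · rintro ⟨t, ht⟩
    set S := ∑ i, c i * Real.sqrt (v i ⬝ᵥ v i) with hS
    have htS : t * S = (r : ℝ) := by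
      rw [← hsum]
      simp_rw [hS, Finset.mul_sum]
      exact Finset.sum_congr rfl fun i _ => (ht i).symm
    have hrpos : (0:ℝ) < r := by exact_mod_cast hr
    have ht0 : t ≠ 0 := by
      rintro rfl; simp at htS; exact hrpos.ne' htS.symm
    have key : ∀ i, c i ^ 2 * (v i ⬝ᵥ v i) / π i
        = (c i * Real.sqrt (v i ⬝ᵥ v i)) / t := by
      intro i
      rcases eq_or_lt_of_le (mul_nonneg (hc i) (Real.sqrt_nonneg _)) with h | h
      · exfalso
        have := (hπ i).1
        rw [ht i, ← h, mul_zero] at this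
        exact lt_irrefl _ this
      · rw [ht i, ← hsq i]
        field_simp
    rw [Finset.sum_congr rfl fun i _ => key i, ← Finset.sum_div, ← hS]
    have hSr : S = (r : ℝ) / t := by field_simp [← htS]; rw [mul_comm]; exact htS
    rw [hSr]
    field_simp
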